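/- arXiv:1807.00268 — 10 statements merged into one kernel-verified Lean document; each statement's English description precedes it below -/
import Mathlib

section
/- In any semi-Heyting algebra L, the lattice reduct is distributive. -/
class SemiHeyting (α : Type*) extends Lattice α, BoundedOrder α where
  himp : α → α → α
  sh1 : ∀ x y : α, x ⊓ himp x y = x ⊓ y
  sh2 : ∀ x y z : α, x ⊓ himp y z = x ⊓ himp (x ⊓ y) (x ⊓ z)
  sh3 : ∀ x : α, himp x x = ⊤

namespace SemiHeyting

variable {α : Type*} [SemiHeyting α]

def star (x : α) : α := himp x ⊥

end SemiHeyting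

class DQD (α : Type*) extends SemiHeyting α where
  prime : α → α
  prime_bot : prime ⊥ = ⊤
  prime_top : prime ⊤ = ⊥
  prime_inf : ∀ x y : α, prime (x ⊓ y) = prime x ⊔ prime y
  prime_prime_sup : ∀ x y : α, prime (prime (x ⊔ y)) = prime (prime x) ⊔ prime (prime y)
  prime_prime_le : ∀ x : α, prime (prime x) ≤ x

class DmsSt (α : Type*) extends DQD α where
  stone : ∀ x : α, SemiHeyting.star x ⊔ SemiHeyting.star (SemiHeyting.star x) = ⊤
  jdm : ∀ x y : α, prime (x ⊔ y) = prime x ⊓ prime y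

open SemiHeyting DQD

lemma aux_le_himp {α : Type*} [SemiHeyting α] {a b t : α} (h : a ⊓ b ≤ t) :
    b ≤ SemiHeyting.himp a (a ⊓ t) := by
  have h2 := SemiHeyting.sh2 b a (a ⊓ t)
  have e1 : b ⊓ (a ⊓ t) = b ⊓ a := by
    apply le_antisymm
    · exact inf_le_inf_left _ inf_le_left
    · refine le_inf inf_le_left (le_inf (inf_le_right) ?_)
      rw [inf_comm] at h; exact h
  rw [e1, inf_comm b a] at h2
  rw [SemiHeyting.sh3] at h2
  calc b = b ⊓ ⊤ := (inf_top_eq b).symm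
    _ = b ⊓ SemiHeyting.himp a (a ⊓ t) := h2.symm
    _ ≤ SemiHeyting.himp a (a ⊓ t) := inf_le_right

theorem stmt0 {α : Type*} [SemiHeyting α] :
    ∀ x y z : α, x ⊓ (y ⊔ z) = (x ⊓ y) ⊔ (x ⊓ z) := by
  intro x y z
  refine le_antisymm ?_ le_inf_sup
  set t := (x ⊓ y) ⊔ (x ⊓ z) with ht
  have hy : y ≤ SemiHeyting.himp x (x ⊓ t) := aux_le_himp le_sup_left
  have hz : z ≤ SemiHeyting.himp x (x ⊓ t) := aux_le_himp le_sup_right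
  have : x ⊓ (y ⊔ z) ≤ x ⊓ SemiHeyting.himp x (x ⊓ t) :=
    inf_le_inf_left _ (sup_le hy hz)
  rw [SemiHeyting.sh1] at this
  exact le_trans this (le_trans inf_le_right inf_le_right)
end

section
/- In any DQD-algebra L, (x ∧ y)′* = x′* ∧ y′* for all x, y. -/
open SemiHeyting DQD

lemma inf_star_eq_bot {α : Type*} [SemiHeyting α] (a : α) : a ⊓ star a = ⊥ := by
  simpa [SemiHeyting.star] using SemiHeyting.sh1 a ⊥

lemma le_star_of_inf_bot {α : Type*} [SemiHeyting α] {z a : α} (h : z ⊓ a = ⊥) :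
    z ≤ star a := by
  have := SemiHeyting.sh2 z a (⊥ : α)
  rw [h] at this
  have h2 : z ⊓ (⊥ : α) = ⊥ := inf_bot_eq z
  rw [h2, SemiHeyting.sh3, inf_top_eq] at this
  calc z = z ⊓ star a := by rw [SemiHeyting.star]; exact this.symm
  _ ≤ star a := inf_le_right

lemma inf_bot_of_le_star {α : Type*} [SemiHeyting α] {z a : α} (h : z ≤ star a) :
    z ⊓ a = ⊥ := by
  have : z ⊓ a ≤ a ⊓ star a := le_inf inf_le_right (le_trans inf_le_left h)
  simpa [inf_star_eq_bot] using le_bot_iff.mp (by simpa [inf_star_eq_bot a] using this)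

lemma star_sup {α : Type*} [SemiHeyting α] (a b : α) :
    star (a ⊔ b) = star a ⊓ star b := by
  apply le_antisymm
  · refine le_inf (le_star_of_inf_bot ?_) (le_star_of_inf_bot ?_)
    · have := inf_bot_of_le_star (le_refl (star (a ⊔ b)))
      exact le_bot_iff.mp (by
        calc star (a ⊔ b) ⊓ a ≤ star (a ⊔ b) ⊓ (a ⊔ b) := inf_le_inf_left _ le_sup_left
        _ = ⊥ := this)
    · have := inf_bot_of_le_star (le_refl (star (a ⊔ b)))
      exact le_bot_iff.mp (by
        calc star (a ⊔ b) ⊓ b ≤ star (a ⊔ b) ⊓ (a ⊔ b) := inf_le_inf_left _ le_sup_right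
        _ = ⊥ := this)
  · apply le_star_of_inf_bot
    have ha : a ≤ star (star a ⊓ star b) := le_star_of_inf_bot (le_bot_iff.mp (by
      calc a ⊓ (star a ⊓ star b) ≤ a ⊓ star a := inf_le_inf_left _ inf_le_left
      _ = ⊥ := inf_star_eq_bot a))
    have hb : b ≤ star (star a ⊓ star b) := le_star_of_inf_bot (le_bot_iff.mp (by
      calc b ⊓ (star a ⊓ star b) ≤ b ⊓ star b := inf_le_inf_left _ inf_le_right
      _ = ⊥ := inf_star_eq_bot b))
    have : a ⊔ b ≤ star (star a ⊓ star b) := sup_le ha hb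
    rw [inf_comm]
    exact inf_bot_of_le_star this

theorem stmt4 {α : Type*} [DQD α] (x y : α) :
    SemiHeyting.star (DQD.prime (x ⊓ y)) = SemiHeyting.star (DQD.prime x) ⊓ SemiHeyting.star (DQD.prime y) := by
  rw [DQD.prime_inf, star_sup]
end

section
/- In any DQD-algebra L, x‴ = x′ for all x. -/
open SemiHeyting DQD

theorem stmt5 {α : Type*} [DQD α] (x : α) :
    DQD.prime (DQD.prime (DQD.prime x)) = DQD.prime x := by
  apply le_antisymm
  · exact DQD.prime_prime_le (DQD.prime x)
  · have h : DQD.prime (DQD.prime x) ⊓ x = DQD.prime (DQD.prime x) :=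
      inf_eq_left.mpr (DQD.prime_prime_le x)
    have := DQD.prime_inf (DQD.prime (DQD.prime x)) x
    rw [h] at this
    exact le_sup_right.trans this.ge
end

section
/- In any DQD-algebra L, x ∨ x⁺ = 1 for all x, where x⁺ := x′*′. -/
open SemiHeyting DQD

theorem stmt6 {α : Type*} [DQD α] (x : α) :
    x ⊔ DQD.prime (SemiHeyting.star (DQD.prime x)) = ⊤ := by
  have h1 : DQD.prime x ⊓ SemiHeyting.star (DQD.prime x) = ⊥ := by
    simpa [SemiHeyting.star] using SemiHeyting.sh1 (DQD.prime x) (⊥ : α)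
  have h2 : DQD.prime (DQD.prime x) ⊔ DQD.prime (SemiHeyting.star (DQD.prime x)) = ⊤ := by
    rw [← DQD.prime_inf, h1, DQD.prime_bot]
  refine top_le_iff.mp ?_
  calc (⊤:α) = _ := h2.symm
    _ ≤ x ⊔ DQD.prime (SemiHeyting.star (DQD.prime x)) :=
      sup_le_sup_right (DQD.prime_prime_le x) _
end

section
/- Let L be a De Morgan semi-Heyting algebra of level 1, i.e., a DQD-algebra satisfying x″ = x and x ∧ x′* = (x ∧ x′*)′*. Then for all x in L, x*′ ∧ x′ ∧ x* = 0. -/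
open SemiHeyting DQD

theorem stmt7 {α : Type*} [DQD α]
    (hdm : ∀ x : α, DQD.prime (DQD.prime x) = x)
    (hlev : ∀ x : α, x ⊓ SemiHeyting.star (DQD.prime x)
      = SemiHeyting.star (DQD.prime (x ⊓ SemiHeyting.star (DQD.prime x))))
    (x : α) :
    DQD.prime (SemiHeyting.star x) ⊓ DQD.prime x ⊓ SemiHeyting.star x = ⊥ := by
  have key : DQD.prime x ⊓ SemiHeyting.star x
      = SemiHeyting.star (x ⊔ DQD.prime (SemiHeyting.star x)) := by
    have h := hlev (DQD.prime x)
    rw [hdm x] at h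
    rw [h, DQD.prime_inf, hdm x]
  rw [inf_assoc, key]
  set p := DQD.prime (SemiHeyting.star x) with hp
  have h2 := SemiHeyting.sh2 p (x ⊔ p) (⊥ : α)
  have hps : p ⊓ (x ⊔ p) = p := inf_eq_left.mpr le_sup_right
  rw [hps, inf_bot_eq] at h2
  calc p ⊓ SemiHeyting.star (x ⊔ p) = p ⊓ SemiHeyting.star p := h2
    _ = p ⊓ ⊥ := SemiHeyting.sh1 p ⊥
    _ = ⊥ := inf_bot_eq p
end

section
/- Every De Morgan semi-Heyting algebra of level 1 satisfies the Stone identity x* ∨ x** = 1. -/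
open SemiHeyting DQD

section Aux

variable {α : Type*} [SemiHeyting α]

lemma aux_inf_star (x : α) : x ⊓ SemiHeyting.star x = ⊥ := by
  have := SemiHeyting.sh1 x (⊥ : α)
  simpa [SemiHeyting.star] using this

lemma aux_le_star {u v : α} (h : u ⊓ v = ⊥) : u ≤ SemiHeyting.star v := by
  have h2 := SemiHeyting.sh2 u v (⊥ : α)
  rw [h] at h2
  simp only [inf_bot_eq, SemiHeyting.sh3, inf_top_eq] at h2
  have : u ⊓ star v = u := by simpa [SemiHeyting.star] using h2.symm
  exact le_of_inf_eq this

lemma aux_star_anti {u v : α} (h : u ≤ v) : star v ≤ star u := by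
  apply aux_le_star
  have : star v ⊓ u ≤ v ⊓ star v := by
    rw [inf_comm]
    exact inf_le_inf h le_rfl
  rw [aux_inf_star] at this
  exact le_bot_iff.mp this

lemma aux_le_star_star (x : α) : x ≤ star (star x) := by
  exact aux_le_star (aux_inf_star x)

lemma aux_star_star_star (x : α) : star (star (star x)) = star x :=
  le_antisymm (aux_star_anti (aux_le_star_star x)) (aux_le_star_star (star x))

end Aux

theorem stmt8 {α : Type*} [DQD α]
    (hdm : ∀ x : α, DQD.prime (DQD.prime x) = x)
    (hlev : ∀ x : α, x ⊓ SemiHeyting.star (DQD.prime x)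
      = SemiHeyting.star (DQD.prime (x ⊓ SemiHeyting.star (DQD.prime x))))
    (x : α) :
    SemiHeyting.star x ⊔ SemiHeyting.star (SemiHeyting.star x) = ⊤ := by
  set a := star (star x) with ha
  have haa : star a = star x := aux_star_star_star x
  -- goal is star x ⊔ a = ⊤, i.e. a ⊔ star a = ⊤ up to comm
  have hsup_prime : ∀ u v : α, DQD.prime (u ⊔ v) = DQD.prime u ⊓ DQD.prime v := by
    intro u v
    have h1 : DQD.prime (DQD.prime u ⊓ DQD.prime v) = u ⊔ v := by
      rw [DQD.prime_inf, hdm, hdm]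
    calc DQD.prime (u ⊔ v) = DQD.prime (DQD.prime (DQD.prime u ⊓ DQD.prime v)) := by rw [h1]
    _ = DQD.prime u ⊓ DQD.prime v := hdm _
  -- Step 1: prime a ⊓ star a ⊓ prime (star a) = ⊥
  have step1 : DQD.prime a ⊓ star a ⊓ DQD.prime (star a) = ⊥ := by
    have h := hlev (DQD.prime a)
    rw [hdm] at h
    -- h : prime a ⊓ star a = star (prime (prime a ⊓ star a))
    have hle : DQD.prime a ⊓ star a ≤ star (DQD.prime (star a)) := by
      rw [h, DQD.prime_inf, hdm]
      exact aux_star_anti le_sup_right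
    have := inf_le_inf hle (le_refl (DQD.prime (star a)))
    exact le_bot_iff.mp (this.trans_eq (by rw [inf_comm]; exact aux_inf_star _))
  -- Step 2: prime (star a) ⊓ a ⊓ prime a = ⊥
  have step2 : DQD.prime (star a) ⊓ a ⊓ DQD.prime a = ⊥ := by
    have h := hlev (DQD.prime (star a))
    rw [hdm] at h
    have hss : star (star a) = a := by rw [haa, ← ha]
    rw [hss] at h
    -- h : prime (star a) ⊓ a = star (prime (prime (star a) ⊓ a))
    have hle : DQD.prime (star a) ⊓ a ≤ star (DQD.prime a) := by
      rw [h, DQD.prime_inf, hdm]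
      exact aux_star_anti le_sup_right
    have := inf_le_inf hle (le_refl (DQD.prime a))
    exact le_bot_iff.mp (this.trans_eq (by rw [inf_comm]; exact aux_inf_star _))
  -- c := prime a ⊓ prime (star a) is ⊥
  set c := DQD.prime a ⊓ DQD.prime (star a) with hc
  have hc_a : c ⊓ a = ⊥ := by
    rw [← step2, hc]; ac_rfl
  have hc_sa : c ⊓ star a = ⊥ := by
    rw [← step1, hc]; ac_rfl
  have hc1 : c ≤ star a := aux_le_star hc_a
  have hc2 : c ≤ star (star a) := aux_le_star hc_sa
  have hcbot : c = ⊥ := by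
    have : c ≤ star a ⊓ star (star a) := le_inf hc1 hc2
    have h2 : star a ⊓ star (star a) = ⊥ := aux_inf_star (star a)
    exact le_bot_iff.mp (h2 ▸ this)
  have : DQD.prime (a ⊔ star a) = ⊥ := by
    rw [hsup_prime, ← hc, hcbot]
  have hfin : a ⊔ star a = ⊤ := by
    have := congrArg DQD.prime this
    rw [hdm, DQD.prime_bot] at this
    exact this
  rw [haa] at hfin
  rw [sup_comm] at hfin
  exact hfin
end

section
/- Let L be a dually ms Stone semi-Heyting algebra (DmsSt-algebra). Then for all x in L, x*′* ≤ x′. -/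
open SemiHeyting DQD

namespace SemiHeyting

variable {α : Type*} [SemiHeyting α]

/-- If `a ⊓ t ≤ s`, then `t ≤ a → (a ⊓ s)`. -/
lemma le_himp_of {a t s : α} (h : a ⊓ t ≤ s) : t ≤ himp a (a ⊓ s) := by
  have harg : t ⊓ a = t ⊓ (a ⊓ s) := by
    rw [← inf_assoc]
    exact (inf_eq_left.2 (by rw [inf_comm t a]; exact h)).symm
  have : t ⊓ himp a (a ⊓ s) = t := by
    rw [sh2 t a (a ⊓ s), ← harg, sh3, inf_top_eq]
  calc t = t ⊓ himp a (a ⊓ s) := this.symm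
    _ ≤ himp a (a ⊓ s) := inf_le_right

/-- If `t ≤ a → (a ⊓ s)`, then `a ⊓ t ≤ s`. -/
lemma inf_le_of_le_himp {a t s : α} (h : t ≤ himp a (a ⊓ s)) : a ⊓ t ≤ s := by
  have ht : t ⊓ himp a (a ⊓ s) = t := inf_eq_left.2 h
  calc a ⊓ t = a ⊓ (t ⊓ himp a (a ⊓ s)) := by rw [ht]
    _ = (a ⊓ himp a (a ⊓ s)) ⊓ t := by ac_rfl
    _ = (a ⊓ (a ⊓ s)) ⊓ t := by rw [sh1]
    _ ≤ a ⊓ s := le_trans inf_le_left inf_le_right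
    _ ≤ s := inf_le_right

/-- Semi-Heyting algebras are distributive. -/
lemma inf_sup_le (a y z : α) : a ⊓ (y ⊔ z) ≤ (a ⊓ y) ⊔ (a ⊓ z) := by
  apply inf_le_of_le_himp
  apply sup_le
  · exact le_himp_of le_sup_left
  · exact le_himp_of le_sup_right

lemma inf_star_self (x : α) : x ⊓ star x = ⊥ := by
  rw [star, sh1, inf_bot_eq]

end SemiHeyting

theorem stmt9 {α : Type*} [DmsSt α] (x : α) :
    SemiHeyting.star (DQD.prime (SemiHeyting.star x)) ≤ DQD.prime x := by
  set a := SemiHeyting.star (DQD.prime (SemiHeyting.star x)) with ha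
  set b := DQD.prime (SemiHeyting.star x) with hb
  set c := DQD.prime x with hc
  have hab : a ⊓ b = ⊥ := by
    rw [ha, inf_comm]; exact SemiHeyting.inf_star_self b
  have hbc : b ⊔ c = ⊤ := by
    rw [hb, hc, sup_comm, ← DQD.prime_inf, SemiHeyting.inf_star_self, DQD.prime_bot]
  calc a = a ⊓ (b ⊔ c) := by rw [hbc, inf_top_eq]
    _ ≤ (a ⊓ b) ⊔ (a ⊓ c) := SemiHeyting.inf_sup_le a b c
    _ = a ⊓ c := by rw [hab, bot_sup_eq]
    _ ≤ c := inf_le_right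
end

section
/- Let L be a dually ms Stone semi-Heyting algebra. Then for all x in L, x′ ∨ x*′** = 1. -/
open SemiHeyting DQD


lemma inf_star {α : Type*} [SemiHeyting α] (a : α) : a ⊓ SemiHeyting.star a = ⊥ := by
  have h := SemiHeyting.sh1 a (⊥ : α)
  simpa [SemiHeyting.star] using h

lemma le_star_star {α : Type*} [SemiHeyting α] (a : α) :
    a ≤ SemiHeyting.star (SemiHeyting.star a) := by
  have h := SemiHeyting.sh2 a (SemiHeyting.star a) (⊥ : α)
  rw [inf_star a, inf_bot_eq, SemiHeyting.sh3, inf_top_eq] at h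
  exact inf_eq_left.mp (show a ⊓ SemiHeyting.star (SemiHeyting.star a) = a from h)

theorem stmt10 {α : Type*} [DmsSt α] (x : α) :
    DQD.prime x ⊔ SemiHeyting.star (SemiHeyting.star (DQD.prime (SemiHeyting.star x))) = ⊤ := by
  have h1 : DQD.prime x ⊔ DQD.prime (SemiHeyting.star x) = (⊤ : α) := by
    rw [← DQD.prime_inf, inf_star, DQD.prime_bot]
  have h2 := le_star_star (DQD.prime (SemiHeyting.star x))
  have := sup_le_sup_left h2 (DQD.prime x)
  rw [h1] at this
  exact top_le_iff.mp this
end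

section
/- Let L be a dually ms Stone semi-Heyting algebra. Then for all x in L, x*′ ≤ x**′*. -/
open SemiHeyting DQD

theorem stmt11 {α : Type*} [DmsSt α] (x : α) :
    DQD.prime (SemiHeyting.star x)
      ≤ SemiHeyting.star (DQD.prime (SemiHeyting.star (SemiHeyting.star x))) := by
  have hdisj : DQD.prime (SemiHeyting.star x) ⊓ DQD.prime (SemiHeyting.star (SemiHeyting.star x)) = ⊥ := by
    rw [← DmsSt.jdm, DmsSt.stone, DQD.prime_top]
  rw [← inf_eq_left]
  calc DQD.prime (SemiHeyting.star x) ⊓ SemiHeyting.star (DQD.prime (SemiHeyting.star (SemiHeyting.star x)))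
      = DQD.prime (SemiHeyting.star x) ⊓
        SemiHeyting.himp
          (DQD.prime (SemiHeyting.star x) ⊓ DQD.prime (SemiHeyting.star (SemiHeyting.star x)))
          (DQD.prime (SemiHeyting.star x) ⊓ ⊥) := SemiHeyting.sh2 _ _ _
    _ = DQD.prime (SemiHeyting.star x) ⊓ SemiHeyting.himp ⊥ ⊥ := by rw [hdisj, inf_bot_eq]
    _ = DQD.prime (SemiHeyting.star x) := by rw [SemiHeyting.sh3, inf_top_eq]
end

section
/- Let L be a dually ms Stone semi-Heyting algebra. Then for all x in L, (x*)⁺ ≤ x**, where y⁺ := y′*′. -/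
open SemiHeyting DQD

lemma prime_antitone {α : Type*} [DQD α] {u v : α} (h : u ≤ v) :
    DQD.prime v ≤ DQD.prime u := by
  have := DQD.prime_inf u v
  rw [inf_eq_left.mpr h] at this
  rw [this]; exact le_sup_right

lemma le_star_of_inf_bot_s13 {α : Type*} [SemiHeyting α] {u v : α} (h : u ⊓ v = ⊥) :
    v ≤ SemiHeyting.star u := by
  have h2 := SemiHeyting.sh2 v u (⊥ : α)
  rw [inf_comm v u, h, inf_bot_eq, SemiHeyting.sh3, inf_top_eq] at h2
  rw [SemiHeyting.star]
  exact h2 ▸ inf_le_right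

theorem stmt13 {α : Type*} [DmsSt α] (x : α) :
    DQD.prime (SemiHeyting.star (DQD.prime (SemiHeyting.star x)))
      ≤ SemiHeyting.star (SemiHeyting.star x) := by
  have hst : DQD.prime (SemiHeyting.star x) ⊓ DQD.prime (SemiHeyting.star (SemiHeyting.star x)) = ⊥ := by
    rw [← DmsSt.jdm, DmsSt.stone, DQD.prime_top]
  have h1 : DQD.prime (SemiHeyting.star (SemiHeyting.star x))
      ≤ SemiHeyting.star (DQD.prime (SemiHeyting.star x)) := le_star_of_inf_bot_s13 hst
  calc DQD.prime (SemiHeyting.star (DQD.prime (SemiHeyting.star x)))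
      ≤ DQD.prime (DQD.prime (SemiHeyting.star (SemiHeyting.star x))) := prime_antitone h1
    _ ≤ SemiHeyting.star (SemiHeyting.star x) := DQD.prime_prime_le _
end
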